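/- Let a, b be positive real numbers with a + b = 1. Then for any 0 < ε < b, we have a·log(1 + ε/a) + b·log(1 − ε/b) ≤ −ε²/(2b). -/

import Mathlib

lemma aux_log_one_sub (x : ℝ) (h0 : 0 ≤ x) (h1 : x < 1) :
    Real.log (1 - x) ≤ -x - x ^ 2 / 2 := by
  set f : ℝ → ℝ := fun t => -t - t ^ 2 / 2 - Real.log (1 - t) with hf
  have key : MonotoneOn f (Set.Icc 0 x) := by
    apply monotoneOn_of_deriv_nonneg (convex_Icc 0 x)
    · apply ContinuousOn.sub (by fun_prop)
      apply Real.continuousOn_log.comp (by fun_prop)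
      intro t ht
      simp only [Set.mem_Icc] at ht
      have : 1 - t > 0 := by linarith [ht.2]
      simp [ne_of_gt this]
    · intro t ht
      rw [interior_Icc] at ht
      have h1t : (0:ℝ) < 1 - t := by linarith [ht.2]
      apply DifferentiableAt.differentiableWithinAt
      apply DifferentiableAt.sub (by fun_prop)
      exact (Real.differentiableAt_log (ne_of_gt h1t)).comp t (by fun_prop)
    · intro t ht
      rw [interior_Icc] at ht
      have h1t : (0:ℝ) < 1 - t := by linarith [ht.2]
      have hd : HasDerivAt f (-1 - t - (-1) / (1 - t)) t := by
        have hlog : HasDerivAt (fun t : ℝ => Real.log (1 - t)) ((-1) / (1 - t)) t := by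
          have := (Real.hasDerivAt_log (ne_of_gt h1t)).comp t
            ((hasDerivAt_const t (1:ℝ)).sub (hasDerivAt_id t))
          simpa [div_eq_mul_inv, mul_comm, Function.comp_def] using this
        have h1 : HasDerivAt (fun t : ℝ => -t - t ^ 2 / 2) (-1 - t) t := by
          have := ((hasDerivAt_id t).neg.sub
            (((hasDerivAt_id t).pow 2).div_const 2))
          exact this.congr_deriv (by norm_num [id] <;> ring)
        exact h1.sub hlog
      rw [hd.deriv]
      have : -1 - t - (-1) / (1 - t) = t ^ 2 / (1 - t) := by
        field_simp; ring
      rw [this]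
      positivity
  have h := key (Set.left_mem_Icc.mpr h0) (Set.right_mem_Icc.mpr h0) h0
  simp only [hf] at h
  norm_num at h
  linarith

theorem stmt_0 (a b ε : ℝ) (ha : 0 < a) (hb : 0 < b) (hab : a + b = 1)
    (hε0 : 0 < ε) (hεb : ε < b) :
    a * Real.log (1 + ε / a) + b * Real.log (1 - ε / b) ≤ -ε ^ 2 / (2 * b) := by
  have h1 : Real.log (1 + ε / a) ≤ ε / a := by
    have hpos : (0:ℝ) < 1 + ε / a := by positivity
    have := Real.log_le_sub_one_of_pos hpos
    linarith
  have hx0 : 0 ≤ ε / b := by positivity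
  have hx1 : ε / b < 1 := (div_lt_one hb).mpr hεb
  have h2 := aux_log_one_sub (ε / b) hx0 hx1
  have hA : a * Real.log (1 + ε / a) ≤ ε := by
    calc a * Real.log (1 + ε / a) ≤ a * (ε / a) := by
          exact mul_le_mul_of_nonneg_left h1 ha.le
      _ = ε := by field_simp
  have hB : b * Real.log (1 - ε / b) ≤ -ε - ε ^ 2 / (2 * b) := by
    calc b * Real.log (1 - ε / b) ≤ b * (-(ε / b) - (ε / b) ^ 2 / 2) :=
          mul_le_mul_of_nonneg_left h2 hb.le
      _ = -ε - ε ^ 2 / (2 * b) := by field_simp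
  rw [neg_div]
  linarith
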